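/- Let S be a nonempty finite type, and let p, q : S → ℝ with 0 < p z and 0 < q z for all z ∈ S, ∑_{z ∈ S} p z = 1, and ∑_{z ∈ S} q z = 1. Then ∑_{z ∈ S} (p z · Real.log (p z / (p z + q z)) + q z · Real.log (q z / (p z + q z))) ≥ −2 · Real.log 2, with equality if and only if p = q. -/

import Mathlib

open Finset

lemma gan_aux_ge (a b : ℝ) (ha : 0 < a) (hb : 0 < b) :
    a - b ≤ a * Real.log (a / b) := by
  have h := Real.log_le_sub_one_of_pos (div_pos hb ha)
  have h2 : a * Real.log (b / a) ≤ a * (b / a - 1) :=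
    mul_le_mul_of_nonneg_left h ha.le
  have h3 : a * (b / a - 1) = b - a := by field_simp
  have h4 : Real.log (a / b) = - Real.log (b / a) := by
    rw [← Real.log_inv, inv_div]
  rw [h4]; nlinarith

lemma gan_aux_lt (a b : ℝ) (ha : 0 < a) (hb : 0 < b) (hne : a ≠ b) :
    a - b < a * Real.log (a / b) := by
  have hba : b / a ≠ 1 := fun h => hne ((div_eq_one_iff_eq ha.ne').mp h).symm
  have h := Real.log_lt_sub_one_of_pos (div_pos hb ha) hba
  have h2 : a * Real.log (b / a) < a * (b / a - 1) :=
    mul_lt_mul_of_pos_left h ha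
  have h3 : a * (b / a - 1) = b - a := by field_simp
  have h4 : Real.log (a / b) = - Real.log (b / a) := by
    rw [← Real.log_inv, inv_div]
  rw [h4]; nlinarith

/-- Global-optimum characterization from Goodfellow et al.'s GAN analysis: for
strictly positive probability mass functions `p` and `q` on a finite set, the
optimal adversarial criterion is at least `-2·log 2`, with equality iff `p = q`. -/
theorem gan_global_optimum
    {S : Type*} [Fintype S] [Nonempty S]
    (p q : S → ℝ) (hp : ∀ z, 0 < p z) (hq : ∀ z, 0 < q z)
    (hp1 : ∑ z : S, p z = 1) (hq1 : ∑ z : S, q z = 1) :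
    ∑ z : S, (p z * Real.log (p z / (p z + q z))
        + q z * Real.log (q z / (p z + q z)))
      ≥ -2 * Real.log 2
    ∧ (∑ z : S, (p z * Real.log (p z / (p z + q z))
          + q z * Real.log (q z / (p z + q z)))
        = -2 * Real.log 2 ↔ p = q) := by
  set m : S → ℝ := fun z => (p z + q z) / 2 with hm
  have hmpos : ∀ z, 0 < m z := fun z => by
    have := hp z; have := hq z; simp only [hm]; positivity
  -- rewrite each term
  have hterm : ∀ z, p z * Real.log (p z / (p z + q z))
      + q z * Real.log (q z / (p z + q z))
      = (p z * Real.log (p z / m z) + q z * Real.log (q z / m z))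
        - (p z + q z) * Real.log 2 := by
    intro z
    have hp' := hp z; have hq' := hq z
    have hpq : (0:ℝ) < p z + q z := by linarith
    have e1 : p z / (p z + q z) = (p z / m z) / 2 := by
      simp only [hm]; field_simp
    have e2 : q z / (p z + q z) = (q z / m z) / 2 := by
      simp only [hm]; field_simp
    rw [e1, e2, Real.log_div (by positivity) two_ne_zero,
      Real.log_div (by positivity) two_ne_zero]
    ring
  have hsum : ∑ z : S, (p z * Real.log (p z / (p z + q z))
      + q z * Real.log (q z / (p z + q z)))
      = (∑ z : S, (p z * Real.log (p z / m z) + q z * Real.log (q z / m z)))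
        - 2 * Real.log 2 := by
    rw [Finset.sum_congr rfl (fun z _ => hterm z), Finset.sum_sub_distrib,
      ← Finset.sum_mul, Finset.sum_add_distrib, Finset.sum_add_distrib, hp1, hq1]
    norm_num
  have hg : ∀ z, 0 ≤ p z * Real.log (p z / m z) + q z * Real.log (q z / m z) := by
    intro z
    have h1 := gan_aux_ge (p z) (m z) (hp z) (hmpos z)
    have h2 := gan_aux_ge (q z) (m z) (hq z) (hmpos z)
    have h0 : p z - m z + (q z - m z) = 0 := by simp only [hm]; ring
    linarith
  have hG0 : 0 ≤ ∑ z : S, (p z * Real.log (p z / m z) + q z * Real.log (q z / m z)) :=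
    Finset.sum_nonneg (fun z _ => hg z)
  constructor
  · rw [hsum]; linarith
  constructor
  · intro heq
    by_contra hne
    obtain ⟨z0, hz0⟩ : ∃ z, p z ≠ q z := by
      by_contra h
      push_neg at h
      exact hne (funext h)
    have hpm : p z0 ≠ m z0 := by
      simp only [hm]
      intro h
      apply hz0
      linarith [h]
    have h1 := gan_aux_lt (p z0) (m z0) (hp z0) (hmpos z0) hpm
    have h2 := gan_aux_ge (q z0) (m z0) (hq z0) (hmpos z0)
    have h0 : p z0 - m z0 + (q z0 - m z0) = 0 := by simp only [hm]; ring
    have hstrict : (0:ℝ) < p z0 * Real.log (p z0 / m z0) + q z0 * Real.log (q z0 / m z0) := by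
      linarith
    have hGpos : 0 < ∑ z : S, (p z * Real.log (p z / m z) + q z * Real.log (q z / m z)) :=
      Finset.sum_pos' (fun z _ => hg z) ⟨z0, Finset.mem_univ z0, hstrict⟩
    rw [hsum] at heq
    linarith
  · intro heq
    subst heq
    have : ∀ z : S, p z * Real.log (p z / (p z + p z))
        + p z * Real.log (p z / (p z + p z)) = p z * (-2 * Real.log 2) := by
      intro z
      have hp' := hp z
      have e : p z / (p z + p z) = 1 / 2 := by field_simp; ring
      rw [e]
      rw [show (1:ℝ)/2 = 2⁻¹ by norm_num, Real.log_inv]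
      ring
    rw [Finset.sum_congr rfl (fun z _ => this z), ← Finset.sum_mul, hp1]
    ring
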